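/- In particular, for α > 1: H^(α)(P) ≤ (α²/(α²-1))·H^(α+1)(P). -/

import Mathlib

open Real Finset

/-- For α > 1: H^(α)(P) ≤ (α²/(α²-1))·H^(α+1)(P). -/
theorem renyi_entropy_successive_order {B : ℕ} (p : Fin B → ℝ)
    (hp : ∀ b, 0 ≤ p b) (hsum : ∑ b, p b = 1)
    (α : ℝ) (hα : 1 < α) :
    (1 / (1 - α)) * Real.logb 2 (∑ b, p b ^ α) ≤
      (α ^ 2 / (α ^ 2 - 1)) * ((1 / (1 - (α + 1))) * Real.logb 2 (∑ b, p b ^ (α + 1))) := by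
  have hα0 : 0 < α := by linarith
  have hα1 : 0 < α - 1 := by linarith
  have hα2 : 0 < α ^ 2 - 1 := by nlinarith
  -- there is a positive coordinate
  obtain ⟨b₀, hb₀⟩ : ∃ b, 0 < p b := by
    by_contra h
    push_neg at h
    have : ∀ b, p b = 0 := fun b => le_antisymm (h b) (hp b)
    simp [this] at hsum
  set Sα := ∑ b, p b ^ α with hSα
  set Sβ := ∑ b, p b ^ (α + 1) with hSβ
  have hSα_pos : 0 < Sα :=
    Finset.sum_pos' (fun b _ => Real.rpow_nonneg (hp b) _)
      ⟨b₀, Finset.mem_univ _, Real.rpow_pos_of_pos hb₀ _⟩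
  have hSβ_pos : 0 < Sβ :=
    Finset.sum_pos' (fun b _ => Real.rpow_nonneg (hp b) _)
      ⟨b₀, Finset.mem_univ _, Real.rpow_pos_of_pos hb₀ _⟩
  have hple : ∀ b, p b ≤ 1 := by
    intro b
    calc p b ≤ ∑ b, p b := Finset.single_le_sum (fun i _ => hp i) (Finset.mem_univ b)
    _ = 1 := hsum
  -- Sα ≤ 1
  have hSα_le_one : Sα ≤ 1 := by
    rw [← hsum]
    apply Finset.sum_le_sum
    intro b _
    calc p b ^ α ≤ p b ^ (1 : ℝ) := by
          rcases eq_or_lt_of_le (hp b) with h | h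
          · rw [← h, Real.zero_rpow (by linarith), Real.zero_rpow one_ne_zero]
          · exact Real.rpow_le_rpow_of_exponent_ge h (hple b) (le_of_lt hα)
      _ = p b := Real.rpow_one _
  -- each p b ≤ Sα ^ (1/α)
  have hb_le : ∀ b, p b ≤ Sα ^ (1 / α) := by
    intro b
    have h1 : p b ^ α ≤ Sα :=
      Finset.single_le_sum (fun i _ => Real.rpow_nonneg (hp i) _) (Finset.mem_univ b)
    have h2 : (p b ^ α) ^ (1 / α) ≤ Sα ^ (1 / α) :=
      Real.rpow_le_rpow (Real.rpow_nonneg (hp b) _) h1 (by positivity)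
    rw [one_div]
    rwa [one_div, Real.rpow_rpow_inv (hp b) (ne_of_gt hα0)] at h2
  -- Sβ ≤ Sα ^ ((α+1)/α)
  have hkey : Sβ ≤ Sα ^ (1 + 1 / α) := by
    have : Sβ ≤ ∑ b, p b ^ α * Sα ^ (1 / α) := by
      apply Finset.sum_le_sum
      intro b _
      rw [Real.rpow_add' (hp b) (by linarith)]
      rw [Real.rpow_one]
      exact mul_le_mul_of_nonneg_left (hb_le b) (Real.rpow_nonneg (hp b) _)
    calc Sβ ≤ ∑ b, p b ^ α * Sα ^ (1 / α) := this
      _ = Sα * Sα ^ (1 / α) := by rw [← Finset.sum_mul]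
      _ = Sα ^ (1 + 1 / α) := by
          rw [Real.rpow_add hSα_pos, Real.rpow_one]
  -- pass to logs
  have hlog : Real.logb 2 Sβ ≤ (1 + 1 / α) * Real.logb 2 Sα := by
    calc Real.logb 2 Sβ ≤ Real.logb 2 (Sα ^ (1 + 1 / α)) :=
          Real.logb_le_logb_of_le (by norm_num) hSβ_pos hkey
      _ = (1 + 1 / α) * Real.logb 2 Sα := Real.logb_rpow_eq_mul_logb_of_pos hSα_pos
  set Lα := Real.logb 2 Sα
  set Lβ := Real.logb 2 Sβ
  have h1 : α * Lβ ≤ (α + 1) * Lα := by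
    have := mul_le_mul_of_nonneg_left hlog (le_of_lt hα0)
    have hr : α * ((1 + 1 / α) * Lα) = (α + 1) * Lα := by
      field_simp
    linarith [hr ▸ this]
  have hne1 : (1:ℝ) - α ≠ 0 := by linarith
  have hne2 : α ^ 2 - 1 ≠ 0 := ne_of_gt hα2
  have e1 : (1 / (1 - α)) * Lα = (-((α + 1) * Lα)) / (α ^ 2 - 1) := by
    field_simp
    ring
  have e2 : (α ^ 2 / (α ^ 2 - 1)) * ((1 / (1 - (α + 1))) * Lβ)
      = (-(α * Lβ)) / (α ^ 2 - 1) := by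
    have hα0' : α ≠ 0 := ne_of_gt hα0
    field_simp
    ring_nf
    field_simp
  rw [e1, e2]
  apply div_le_div_of_nonneg_right ?_ hα2.le
  linarith
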